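/- For any α ≥ 0 and T ≥ |α − 1|, the 2×2 diagonal matrices A = diag(1 + T, α) and B = diag(1, T + α) satisfy Tr A = Tr B, λ_min(B) = 1 (when α + T ≥ 1), ‖A − B‖₁/2 = T, and achieve equality S(A‖B) = (1 + T)·log(1 + T) − α·log(1 + T/α) (with the convention that α·log(1 + T/α) = 0 when α = 0). -/

import Mathlib

open Matrix MeasureTheory
open scoped ComplexOrder

/-- Matrix logarithm on the support: apply `Real.log` (which is `0` at `0`) to the
eigenvalues of a Hermitian matrix via functional calculus; junk value `0` otherwise. -/
noncomputable def mlog {n : Type*} [Fintype n] [DecidableEq n] (A : Matrix n n ℂ) :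
    Matrix n n ℂ :=
  if hA : A.IsHermitian then hA.cfc Real.log else 0

/-- Quantum relative entropy `S(A‖B) = Tr A (log A - log B)`. -/
noncomputable def qRelEnt {n : Type*} [Fintype n] [DecidableEq n] (A B : Matrix n n ℂ) : ℝ :=
  ((A * (mlog A - mlog B)).trace).re

/-- The positive semidefinite square root of a positive semidefinite matrix, as
`Matrix.PosSemidef.sqrt` was defined in the older Mathlib. -/
noncomputable def Matrix.PosSemidef.sqrt {n : Type*} [Fintype n] [DecidableEq n]
    {A : Matrix n n ℂ} (hA : A.PosSemidef) : Matrix n n ℂ :=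
  hA.1.eigenvectorUnitary.1 * diagonal ((↑) ∘ (√·) ∘ hA.1.eigenvalues) *
  (star hA.1.eigenvectorUnitary : Matrix n n ℂ)

theorem Matrix.PosSemidef.sqrt_isHermitian {n : Type*} [Fintype n] [DecidableEq n]
    {A : Matrix n n ℂ} (hA : A.PosSemidef) : hA.sqrt.IsHermitian := by
  unfold Matrix.PosSemidef.sqrt
  rw [Matrix.star_eq_conjTranspose]
  exact isHermitian_mul_mul_conjTranspose _
    (isHermitian_diagonal_of_self_adjoint _ (funext fun i => Complex.conj_ofReal _))

/-- Trace norm `‖X‖₁ = Tr √(Xᴴ X)`. -/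
noncomputable def traceNorm {n : Type*} [Fintype n] [DecidableEq n] (X : Matrix n n ℂ) : ℝ :=
  ((Matrix.posSemidef_conjTranspose_mul_self X).sqrt.trace).re

/-- Smallest eigenvalue of a Hermitian matrix (junk value `0` otherwise). -/
noncomputable def lamMin {n : Type*} [Fintype n] [DecidableEq n] (A : Matrix n n ℂ) : ℝ :=
  if hA : A.IsHermitian then ⨅ i, hA.eigenvalues i else 0

/-- Largest eigenvalue of a Hermitian matrix (junk value `0` otherwise). -/
noncomputable def lamMax {n : Type*} [Fintype n] [DecidableEq n] (A : Matrix n n ℂ) : ℝ :=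
  if hA : A.IsHermitian then ⨆ i, hA.eigenvalues i else 0

/-- Operator norm: largest eigenvalue of `√(Xᴴ X)` (largest singular value). -/
noncomputable def opNorm {n : Type*} [Fintype n] [DecidableEq n] (X : Matrix n n ℂ) : ℝ :=
  ⨆ i, (Matrix.posSemidef_conjTranspose_mul_self X).sqrt_isHermitian.eigenvalues i

section helpers

lemma isHermitian_diag2 (a b : ℝ) :
    (Matrix.diagonal ![(a:ℂ), (b:ℂ)]).IsHermitian := by
  have hv : star ![(a:ℂ), (b:ℂ)] = ![(a:ℂ), (b:ℂ)] := by
    funext i; fin_cases i <;> simp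
  rw [Matrix.IsHermitian, Matrix.diagonal_conjTranspose, hv]

lemma spectrum_diag2 {a b x : ℝ} (hx : x ∈ spectrum ℝ (Matrix.diagonal ![(a:ℂ), (b:ℂ)])) :
    x = a ∨ x = b := by
  rw [← spectrum.preimage_algebraMap ℂ] at hx
  simp only [Set.mem_preimage, spectrum_diagonal, Set.mem_range] at hx
  obtain ⟨i, hi⟩ := hx
  fin_cases i <;> simp [Complex.coe_algebraMap] at hi
  · exact Or.inl (by exact_mod_cast hi.symm)
  · exact Or.inr (by exact_mod_cast hi.symm)

lemma cfc_diag2 (f : ℝ → ℝ) (a b : ℝ) :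
    cfc f (Matrix.diagonal ![(a:ℂ), (b:ℂ)]) = Matrix.diagonal ![(f a : ℂ), (f b : ℂ)] := by
  have hA : (Matrix.diagonal ![(a:ℂ), (b:ℂ)]).IsHermitian := isHermitian_diag2 a b
  have hsa : IsSelfAdjoint (Matrix.diagonal ![(a:ℂ), (b:ℂ)]) := hA
  obtain ⟨p, hpa, hpb⟩ : ∃ p : Polynomial ℝ, p.eval a = f a ∧ p.eval b = f b := by
    rcases eq_or_ne a b with rfl | hab
    · exact ⟨Polynomial.C (f a), by simp, by simp⟩
    · refine ⟨Polynomial.C (f a) + Polynomial.C ((f b - f a)/(b - a)) *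
        (Polynomial.X - Polynomial.C a), by simp, ?_⟩
      have h0 : b - a ≠ 0 := sub_ne_zero.mpr (Ne.symm hab)
      simp only [Polynomial.eval_add, Polynomial.eval_C, Polynomial.eval_mul,
        Polynomial.eval_sub, Polynomial.eval_X]
      rw [div_mul_cancel₀ _ h0]; ring
  have h1 : cfc f (Matrix.diagonal ![(a:ℂ), (b:ℂ)]) =
      cfc p.eval (Matrix.diagonal ![(a:ℂ), (b:ℂ)]) := by
    apply cfc_congr
    intro x hx
    rcases spectrum_diag2 hx with rfl | rfl
    · exact hpa.symm
    · exact hpb.symm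
  rw [h1, cfc_polynomial p (Matrix.diagonal ![(a:ℂ), (b:ℂ)]) hsa]
  have hd : (Matrix.diagonal ![(a:ℂ), (b:ℂ)]) =
      Matrix.diagonalAlgHom ℝ ![(a:ℂ), (b:ℂ)] := rfl
  rw [hd, Polynomial.aeval_algHom_apply]
  simp only [Matrix.diagonalAlgHom_apply]
  have hv : (Polynomial.aeval (![(a:ℂ), (b:ℂ)]) p) = ![((p.eval a : ℝ):ℂ), ((p.eval b : ℝ):ℂ)] := by
    funext i
    have hi : (Polynomial.aeval (![(a:ℂ), (b:ℂ)]) p) i = Polynomial.aeval (![(a:ℂ), (b:ℂ)] i) p :=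
      (Polynomial.aeval_algHom_apply (Pi.evalAlgHom ℝ (fun _ : Fin 2 => ℂ) i) _ p).symm
    fin_cases i <;>
      simp_all [← Complex.coe_algebraMap, Polynomial.aeval_algebraMap_apply]
  rw [hv, hpa, hpb]

end helpers

lemma mlog_diag2 (a b : ℝ) :
    mlog (Matrix.diagonal ![(a:ℂ), (b:ℂ)]) =
      Matrix.diagonal ![(Real.log a : ℂ), (Real.log b : ℂ)] := by
  have hA := isHermitian_diag2 a b
  rw [mlog, dif_pos hA, ← Matrix.IsHermitian.cfc_eq, cfc_diag2]

/-- The bound of the main proposition is achieved by a pair of `2×2` diagonal matrices.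
(When `α = 0`, `α * Real.log (1 + T / α) = 0` holds literally since `T / 0 = 0` in Lean.) -/
theorem relEntropy_bound_sharp (α T : ℝ) (hα : 0 ≤ α) (hT : |α - 1| ≤ T) :
    let A : Matrix (Fin 2) (Fin 2) ℂ := Matrix.diagonal ![((1 + T : ℝ) : ℂ), (α : ℂ)]
    let B : Matrix (Fin 2) (Fin 2) ℂ := Matrix.diagonal ![1, ((T + α : ℝ) : ℂ)]
    A.trace = B.trace ∧
    (1 ≤ α + T → lamMin B = 1) ∧
    traceNorm (A - B) / 2 = T ∧
    qRelEnt A B = (1 + T) * Real.log (1 + T) - α * Real.log (1 + T / α) := by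
  intro A B
  have hT0 : 0 ≤ T := le_trans (abs_nonneg _) hT
  have hBeq : B = Matrix.diagonal ![((1:ℝ):ℂ), ((T+α:ℝ):ℂ)] := by norm_num [B]
  have hAeq : A = Matrix.diagonal ![((1+T:ℝ):ℂ), ((α:ℝ):ℂ)] := rfl
  refine ⟨?_, ?_, ?_, ?_⟩
  · -- traces
    rw [hAeq, hBeq, Matrix.trace_diagonal, Matrix.trace_diagonal]
    simp [Fin.sum_univ_two]
    push_cast
    ring
  · -- lamMin
    intro h1
    have hB : B.IsHermitian := hBeq ▸ isHermitian_diag2 1 (T+α)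
    rw [lamMin, dif_pos hB]
    have hone : (1:ℝ) ∈ spectrum ℝ B := by
      rw [hBeq, ← spectrum.preimage_algebraMap ℂ]
      simp only [Set.mem_preimage, spectrum_diagonal, Set.mem_range]
      exact ⟨0, by simp⟩
    rw [hB.spectrum_real_eq_range_eigenvalues] at hone
    obtain ⟨i0, hi0⟩ := hone
    apply le_antisymm
    · exact (ciInf_le (Set.finite_range _).bddBelow i0).trans_eq hi0
    · apply le_ciInf
      intro i
      have hmem := hB.eigenvalues_mem_spectrum_real i
      have hsp : spectrum ℝ B = spectrum ℝ (Matrix.diagonal ![((1:ℝ):ℂ), ((T+α:ℝ):ℂ)]) := by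
        rw [hBeq]
      rcases spectrum_diag2 (hsp ▸ hmem) with h | h
      · exact h.ge
      · rw [h]; linarith
  · -- trace norm
    have hX : A - B = Matrix.diagonal ![((T:ℝ):ℂ), ((-T:ℝ):ℂ)] := by
      rw [hAeq, hBeq, Matrix.diagonal_sub, Matrix.diagonal_eq_diagonal_iff]
      intro i
      fin_cases i <;> simp <;> push_cast <;> ring
    rw [hX]
    have hPS : (Matrix.diagonal ![((T:ℝ):ℂ), ((T:ℝ):ℂ)]).PosSemidef := by
      refine Matrix.posSemidef_diagonal_iff.mpr fun i => ?_
      fin_cases i <;> simpa using Complex.zero_le_real.mpr hT0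
    have hsq : (Matrix.diagonal ![((T:ℝ):ℂ), ((T:ℝ):ℂ)]) ^ 2 =
        (Matrix.diagonal ![((T:ℝ):ℂ), ((-T:ℝ):ℂ)])ᴴ *
          (Matrix.diagonal ![((T:ℝ):ℂ), ((-T:ℝ):ℂ)]) := by
      rw [pow_two, Matrix.diagonal_conjTranspose, Matrix.diagonal_mul_diagonal,
        Matrix.diagonal_mul_diagonal, Matrix.diagonal_eq_diagonal_iff]
      intro i
      fin_cases i <;> simp [Complex.star_def] <;> push_cast <;> ring
    have hroot : (Matrix.posSemidef_conjTranspose_mul_self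
        (Matrix.diagonal ![((T:ℝ):ℂ), ((-T:ℝ):ℂ)])).sqrt =
        Matrix.diagonal ![((T:ℝ):ℂ), ((T:ℝ):ℂ)] := by
      have e : (Matrix.posSemidef_conjTranspose_mul_self
          (Matrix.diagonal ![((T:ℝ):ℂ), ((-T:ℝ):ℂ)])).sqrt =
          (Matrix.posSemidef_conjTranspose_mul_self
            (Matrix.diagonal ![((T:ℝ):ℂ), ((-T:ℝ):ℂ)])).1.cfc Real.sqrt := by
        rw [Matrix.PosSemidef.sqrt, Matrix.IsHermitian.cfc, Unitary.conjStarAlgAut_apply]; rfl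
      rw [e, ← Matrix.IsHermitian.cfc_eq]
      have h2 : (Matrix.diagonal ![((T:ℝ):ℂ), ((-T:ℝ):ℂ)])ᴴ *
          (Matrix.diagonal ![((T:ℝ):ℂ), ((-T:ℝ):ℂ)]) =
          Matrix.diagonal ![((T*T:ℝ):ℂ), ((T*T:ℝ):ℂ)] := by
        rw [← hsq, pow_two, Matrix.diagonal_mul_diagonal, Matrix.diagonal_eq_diagonal_iff]
        intro i
        fin_cases i <;> simp
      rw [h2, cfc_diag2, Real.sqrt_mul_self hT0]
    rw [traceNorm, hroot, Matrix.trace_diagonal, Fin.sum_univ_two]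
    simp only [Matrix.cons_val_zero, Matrix.cons_val_one, Matrix.head_cons,
      ← Complex.ofReal_add, Complex.ofReal_re]
    ring
  · -- qRelEnt
    have hmA : mlog A = Matrix.diagonal ![(Real.log (1+T) : ℂ), (Real.log α : ℂ)] := by
      rw [hAeq, mlog_diag2]
    have hmB : mlog B = Matrix.diagonal ![((0:ℝ):ℂ), (Real.log (T+α) : ℂ)] := by
      rw [hBeq, mlog_diag2, Real.log_one]
    rw [qRelEnt, hmA, hmB, hAeq, Matrix.diagonal_sub, Matrix.diagonal_mul_diagonal,
      Matrix.trace_diagonal]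
    rw [Fin.sum_univ_two]
    simp only [Matrix.cons_val_zero, Matrix.cons_val_one, Matrix.head_cons, Pi.sub_apply]
    rw [Complex.ofReal_zero, sub_zero, ← Complex.ofReal_sub, ← Complex.ofReal_mul,
      ← Complex.ofReal_mul, ← Complex.ofReal_add, Complex.ofReal_re]
    rcases eq_or_lt_of_le hα with rfl | hα'
    · simp
    · have h1 : 1 + T/α = (T+α)/α := by field_simp; ring
      rw [h1, Real.log_div (by linarith) (ne_of_gt hα')]
      ring
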